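/- Let ν ∈ (0,1) and C > 0, and suppose S : (0,∞) → ℝ is measurable with |S(t)| ≤ C·t^(ν-1) for 0 < t ≤ 1 and |S(t)| ≤ C·t^(-ν-1) for t ≥ 1. Then there exists a constant C₀ such that for all t ≥ 1, t^ν · ∫₀^t |S(t-s)|·s^(-ν) ds ≤ C₀. -/

import Mathlib

open MeasureTheory Set intervalIntegral Real

theorem stmt_18 (ν C : ℝ) (hν : ν ∈ Set.Ioo (0 : ℝ) 1) (hC : 0 < C)
    (S : ℝ → ℝ) (hS : Measurable S)
    (hS₁ : ∀ t : ℝ, 0 < t → t ≤ 1 → |S t| ≤ C * t ^ (ν - 1))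
    (hS₂ : ∀ t : ℝ, 1 ≤ t → |S t| ≤ C * t ^ (-ν - 1)) :
    ∃ C₀ : ℝ, ∀ t : ℝ, 1 ≤ t →
      t ^ ν * ∫ s in (0 : ℝ)..t, |S (t - s)| * s ^ (-ν) ≤ C₀ := by
  obtain ⟨hν0, hν1⟩ := hν
  have hSabs : Measurable fun u => |S u| := continuous_abs.measurable.comp hS
  -- global bounds
  have hB1 : ∀ u : ℝ, 0 < u → |S u| ≤ C * u ^ (ν - 1) := by
    intro u hu
    rcases le_or_gt u 1 with h | h
    · exact hS₁ u hu h
    · refine (hS₂ u h.le).trans ?_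
      have := Real.rpow_le_rpow_of_exponent_le h.le (by linarith : -ν - 1 ≤ ν - 1)
      nlinarith
  have hB2 : ∀ u : ℝ, 0 < u → |S u| ≤ C * u ^ (-ν - 1) := by
    intro u hu
    rcases le_or_gt u 1 with h | h
    · refine (hS₁ u hu h).trans ?_
      have := Real.rpow_le_rpow_of_exponent_ge hu h (by linarith : -ν - 1 ≤ ν - 1)
      nlinarith
    · exact hS₂ u h.le
  -- mono over Ioc
  have mono_Ioc : ∀ (a b : ℝ) (f g : ℝ → ℝ), a ≤ b →
      IntervalIntegrable f volume a b → IntervalIntegrable g volume a b →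
      (∀ x ∈ Set.Ioc a b, f x ≤ g x) →
      ∫ x in a..b, f x ≤ ∫ x in a..b, g x := by
    intro a b f g hab hf hg h
    rw [intervalIntegral.integral_of_le hab, intervalIntegral.integral_of_le hab]
    exact setIntegral_mono_on
      ((intervalIntegrable_iff_integrableOn_Ioc_of_le hab).mp hf)
      ((intervalIntegrable_iff_integrableOn_Ioc_of_le hab).mp hg)
      measurableSet_Ioc h
  -- integrability of |S| on [0, b]
  have hiS : ∀ b : ℝ, 0 ≤ b → IntervalIntegrable (fun u => |S u|) volume 0 b := by
    intro b hb
    refine ((intervalIntegrable_rpow' (by linarith : (-1:ℝ) < ν - 1)).const_mul C).mono_fun'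
      hSabs.aestronglyMeasurable ?_
    rw [uIoc_of_le hb]
    filter_upwards [ae_restrict_mem measurableSet_Ioc] with u hu
    rw [Real.norm_eq_abs, abs_abs]
    exact hB1 u hu.1
  -- uniform bound on ∫_0^b |S|
  have hSint : ∀ b : ℝ, 0 ≤ b → ∫ u in (0:ℝ)..b, |S u| ≤ 2 * C / ν := by
    intro b hb
    have hexp : ν - 1 + 1 = ν := by ring
    rcases le_or_gt b 1 with h1 | h1
    · have hle : ∫ u in (0:ℝ)..b, |S u| ≤ ∫ u in (0:ℝ)..b, C * u ^ (ν - 1) := by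
        refine mono_Ioc 0 b _ _ hb (hiS b hb)
          ((intervalIntegrable_rpow' (by linarith)).const_mul C) ?_
        intro u hu; exact hB1 u hu.1
      have hval : ∫ u in (0:ℝ)..b, C * u ^ (ν - 1) = C * ((b ^ ν - 0) / ν) := by
        rw [intervalIntegral.integral_const_mul,
          integral_rpow (Or.inl (by linarith : (-1:ℝ) < ν - 1)), hexp,
          Real.zero_rpow hν0.ne']
      have hb1 : b ^ ν ≤ 1 := Real.rpow_le_one hb h1 hν0.le
      have hfin : C * ((b ^ ν - 0) / ν) ≤ 2 * C / ν := by
        have he : C * ((b ^ ν - 0) / ν) = C * b ^ ν / ν := by ring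
        rw [he, div_le_div_iff₀ hν0 hν0]
        nlinarith [mul_nonneg (mul_nonneg hC.le hν0.le) (sub_nonneg.mpr hb1)]
      linarith
    · have h0nb : (0:ℝ) ∉ Set.uIcc (1:ℝ) b := by
        rw [Set.uIcc_of_le h1.le]
        simp only [Set.mem_Icc, not_and]
        intro h; linarith
      have hsub : Set.uIoc (1:ℝ) b ⊆ Set.uIoc (0:ℝ) b := by
        rw [uIoc_of_le (show (1:ℝ) ≤ b by linarith), uIoc_of_le hb]
        exact Ioc_subset_Ioc (by norm_num) le_rfl
      have hiS1b : IntervalIntegrable (fun u => |S u|) volume 1 b :=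
        (hiS b hb).mono_set' hsub
      have hsplit : ∫ u in (0:ℝ)..b, |S u| =
          (∫ u in (0:ℝ)..1, |S u|) + ∫ u in (1:ℝ)..b, |S u| :=
        (intervalIntegral.integral_add_adjacent_intervals (hiS 1 zero_le_one) hiS1b).symm
      have hint1b : IntervalIntegrable (fun u => C * u ^ (-ν - 1)) volume 1 b :=
        (intervalIntegrable_rpow (Or.inr h0nb)).const_mul C
      have h2 : ∫ u in (1:ℝ)..b, |S u| ≤ C / ν := by
        have hle : ∫ u in (1:ℝ)..b, |S u| ≤ ∫ u in (1:ℝ)..b, C * u ^ (-ν - 1) := by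
          refine mono_Ioc 1 b _ _ h1.le hiS1b hint1b ?_
          intro u hu; exact hB2 u (by linarith [hu.1])
        have hexp2 : -ν - 1 + 1 = -ν := by ring
        have hval : ∫ u in (1:ℝ)..b, C * u ^ (-ν - 1) =
            C * ((b ^ (-ν) - 1) / (-ν)) := by
          rw [intervalIntegral.integral_const_mul,
            integral_rpow (Or.inr ⟨by intro hc; apply hν0.ne'; linarith, h0nb⟩), hexp2,
            Real.one_rpow]
        have hbn : 0 ≤ b ^ (-ν) := Real.rpow_nonneg hb _
        have hbn1 : b ^ (-ν) ≤ 1 :=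
          Real.rpow_le_one_of_one_le_of_nonpos h1.le (by linarith)
        rw [hval] at hle
        have heq : C * ((b ^ (-ν) - 1) / (-ν)) = C * (1 - b ^ (-ν)) / ν := by
          rw [div_neg]; ring
        have hfin : C * (1 - b ^ (-ν)) / ν ≤ C / ν := by
          rw [div_le_div_iff₀ hν0 hν0]
          nlinarith [mul_nonneg (mul_nonneg hC.le hν0.le) hbn]
        linarith [heq ▸ hle]
      have h11 : ∫ u in (0:ℝ)..1, |S u| ≤ C / ν := by
        have hle : ∫ u in (0:ℝ)..1, |S u| ≤ ∫ u in (0:ℝ)..1, C * u ^ (ν - 1) := by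
          refine mono_Ioc 0 1 _ _ zero_le_one (hiS 1 zero_le_one)
            ((intervalIntegrable_rpow' (by linarith)).const_mul C) ?_
          intro u hu; exact hB1 u hu.1
        have hval : ∫ u in (0:ℝ)..1, C * u ^ (ν - 1) = C * ((1 - 0) / ν) := by
          rw [intervalIntegral.integral_const_mul,
            integral_rpow (Or.inl (by linarith : (-1:ℝ) < ν - 1)), hexp,
            Real.zero_rpow hν0.ne', Real.one_rpow]
        rw [hval] at hle
        calc ∫ u in (0:ℝ)..1, |S u| ≤ C * ((1 - 0)/ν) := hle
          _ = C / ν := by ring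
      rw [hsplit]
      have : 2 * C / ν = C / ν + C / ν := by ring
      linarith
  -- main argument
  refine ⟨4 * C / (1 - ν) + 4 * C / ν, fun t ht => ?_⟩
  have htp : (0:ℝ) < t := by linarith
  have ha0 : (0:ℝ) < t / 2 := by linarith
  set f : ℝ → ℝ := fun s => |S (t - s)| * s ^ (-ν) with hf_def
  have hfm : Measurable f :=
    (hSabs.comp (measurable_const.sub measurable_id)).mul (measurable_id.pow_const (-ν))
  have hfnn : ∀ s : ℝ, 0 ≤ s → 0 ≤ f s := fun s hs =>
    mul_nonneg (abs_nonneg _) (Real.rpow_nonneg hs _)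
  -- pointwise bounds
  have hb_left : ∀ s ∈ Set.Ioc (0:ℝ) (t/2), f s ≤ (C * (t/2) ^ (-ν - 1)) * s ^ (-ν) := by
    intro s hs
    have hts : t / 2 ≤ t - s := by linarith [hs.2]
    have h1 : |S (t - s)| ≤ C * (t - s) ^ (-ν - 1) := hB2 _ (by linarith [hs.1])
    have h2 : (t - s) ^ (-ν - 1) ≤ (t/2) ^ (-ν - 1) :=
      Real.rpow_le_rpow_of_nonpos ha0 hts (by linarith)
    have h3 : |S (t - s)| ≤ C * (t/2) ^ (-ν - 1) := by nlinarith
    exact mul_le_mul_of_nonneg_right h3 (Real.rpow_nonneg hs.1.le _)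
  have hb_right : ∀ s ∈ Set.Ioc (t/2) t, f s ≤ (t/2) ^ (-ν) * |S (t - s)| := by
    intro s hs
    have h2 : s ^ (-ν) ≤ (t/2) ^ (-ν) :=
      Real.rpow_le_rpow_of_nonpos ha0 hs.1.le (by linarith)
    calc f s = |S (t - s)| * s ^ (-ν) := rfl
      _ ≤ |S (t - s)| * (t/2) ^ (-ν) := mul_le_mul_of_nonneg_left h2 (abs_nonneg _)
      _ = (t/2) ^ (-ν) * |S (t - s)| := mul_comm _ _
  -- integrability
  have hg1 : IntervalIntegrable (fun s => (C * (t/2) ^ (-ν - 1)) * s ^ (-ν)) volume 0 (t/2) :=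
    (intervalIntegrable_rpow' (by linarith : (-1:ℝ) < -ν)).const_mul _
  have hSc : IntervalIntegrable (fun s => |S (t - s)|) volume (t/2) t := by
    have h := ((hiS (t/2) ha0.le).comp_sub_left t).symm
    rwa [show t - t/2 = t/2 by ring, sub_zero] at h
  have hg2 : IntervalIntegrable (fun s => (t/2) ^ (-ν) * |S (t - s)|) volume (t/2) t :=
    hSc.const_mul _
  have hf1 : IntervalIntegrable f volume 0 (t/2) := by
    refine hg1.mono_fun' hfm.aestronglyMeasurable ?_
    rw [uIoc_of_le ha0.le]
    filter_upwards [ae_restrict_mem measurableSet_Ioc] with s hs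
    rw [Real.norm_eq_abs, abs_of_nonneg (hfnn s hs.1.le)]
    exact hb_left s hs
  have hf2 : IntervalIntegrable f volume (t/2) t := by
    refine hg2.mono_fun' hfm.aestronglyMeasurable ?_
    rw [uIoc_of_le (by linarith : t/2 ≤ t)]
    filter_upwards [ae_restrict_mem measurableSet_Ioc] with s hs
    rw [Real.norm_eq_abs, abs_of_nonneg (hfnn s (by linarith [hs.1]))]
    exact hb_right s hs
  -- splitting and bounding
  have hsplit : ∫ s in (0:ℝ)..t, f s = (∫ s in (0:ℝ)..(t/2), f s) + ∫ s in (t/2)..t, f s :=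
    (intervalIntegral.integral_add_adjacent_intervals hf1 hf2).symm
  have hI1 : ∫ s in (0:ℝ)..(t/2), f s ≤
      (C * (t/2) ^ (-ν - 1)) * (((t/2) ^ (-ν + 1) - 0) / (-ν + 1)) := by
    have hle := mono_Ioc 0 (t/2) f _ ha0.le hf1 hg1 hb_left
    have hval : ∫ s in (0:ℝ)..(t/2), (C * (t/2) ^ (-ν - 1)) * s ^ (-ν) =
        (C * (t/2) ^ (-ν - 1)) * (((t/2) ^ (-ν + 1) - 0) / (-ν + 1)) := by
      rw [intervalIntegral.integral_const_mul,
        integral_rpow (Or.inl (by linarith : (-1:ℝ) < -ν)),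
        Real.zero_rpow (by intro hc; apply hν0.ne'; linarith : -ν + 1 ≠ 0)]
    linarith [hval ▸ hle]
  have hI2 : ∫ s in (t/2)..t, f s ≤ (t/2) ^ (-ν) * (2 * C / ν) := by
    have hle := mono_Ioc (t/2) t f _ (by linarith) hf2 hg2 hb_right
    have hval : ∫ s in (t/2)..t, (t/2) ^ (-ν) * |S (t - s)| =
        (t/2) ^ (-ν) * ∫ u in (0:ℝ)..(t/2), |S u| := by
      rw [intervalIntegral.integral_const_mul,
        intervalIntegral.integral_comp_sub_left (fun u => |S u|) t, sub_self,
        show t - t/2 = t/2 by ring]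
    have hend : (t/2) ^ (-ν) * ∫ u in (0:ℝ)..(t/2), |S u| ≤ (t/2) ^ (-ν) * (2 * C / ν) :=
      mul_le_mul_of_nonneg_left (hSint (t/2) ha0.le) (Real.rpow_nonneg ha0.le _)
    linarith [hval ▸ hle]
  -- numeric facts
  have hmul : ∀ z : ℝ, (t/2) ^ z = t ^ z * ((2:ℝ) ^ z)⁻¹ := by
    intro z
    rw [show t/2 = t * (2:ℝ)⁻¹ by ring, Real.mul_rpow htp.le (by norm_num),
      Real.inv_rpow (by norm_num)]
  have h4 : (2:ℝ) ^ (2:ℝ) = 4 := by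
    have h := Real.rpow_natCast (2:ℝ) 2
    norm_num at h
    linarith
  have h2le : (2:ℝ) ^ (2*ν) ≤ 4 := by
    calc (2:ℝ) ^ (2*ν) ≤ (2:ℝ) ^ (2:ℝ) :=
          Real.rpow_le_rpow_of_exponent_le one_le_two (by linarith)
      _ = 4 := h4
  have h2le1 : (2:ℝ) ^ ν ≤ 2 := by
    calc (2:ℝ) ^ ν ≤ (2:ℝ) ^ (1:ℝ) :=
          Real.rpow_le_rpow_of_exponent_le one_le_two (by linarith)
      _ = 2 := Real.rpow_one 2
  have htneg : t ^ (-ν) ≤ 1 := Real.rpow_le_one_of_one_le_of_nonpos ht (by linarith)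
  have hinv : ∀ w : ℝ, ((2:ℝ) ^ (-w))⁻¹ = (2:ℝ) ^ w := by
    intro w
    rw [Real.rpow_neg (by norm_num), inv_inv]
  have hA : t ^ ν * ((t/2) ^ (-ν - 1) * (t/2) ^ (-ν + 1)) ≤ 4 := by
    rw [← Real.rpow_add ha0, show -ν - 1 + (-ν + 1) = -(2*ν) by ring, hmul, hinv,
      ← mul_assoc, ← Real.rpow_add htp, show ν + -(2*ν) = -ν by ring]
    calc t ^ (-ν) * (2:ℝ) ^ (2*ν) ≤ 1 * 4 :=
          mul_le_mul htneg h2le (Real.rpow_nonneg (by norm_num) _) zero_le_one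
      _ = 4 := by norm_num
  have hB : t ^ ν * (t/2) ^ (-ν) ≤ 2 := by
    rw [hmul, hinv, ← mul_assoc, ← Real.rpow_add htp, show ν + -ν = 0 by ring,
      Real.rpow_zero, one_mul]
    exact h2le1
  -- conclusion
  have htν : (0:ℝ) ≤ t ^ ν := Real.rpow_nonneg htp.le _
  have hIle : ∫ s in (0:ℝ)..t, f s ≤
      (C * (t/2) ^ (-ν - 1)) * (((t/2) ^ (-ν + 1) - 0) / (-ν + 1)) +
        (t/2) ^ (-ν) * (2 * C / ν) := by
    rw [hsplit]; exact add_le_add hI1 hI2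
  have hco1 : (0:ℝ) ≤ C / (-ν + 1) := div_nonneg hC.le (by linarith)
  have hco2 : (0:ℝ) ≤ 2 * C / ν := by positivity
  calc t ^ ν * ∫ s in (0:ℝ)..t, f s
      ≤ t ^ ν * ((C * (t/2) ^ (-ν - 1)) * (((t/2) ^ (-ν + 1) - 0) / (-ν + 1)) +
        (t/2) ^ (-ν) * (2 * C / ν)) := mul_le_mul_of_nonneg_left hIle htν
    _ = (C / (-ν + 1)) * (t ^ ν * ((t/2) ^ (-ν - 1) * (t/2) ^ (-ν + 1))) +
        (2 * C / ν) * (t ^ ν * (t/2) ^ (-ν)) := by ring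
    _ ≤ (C / (-ν + 1)) * 4 + (2 * C / ν) * 2 :=
        add_le_add (mul_le_mul_of_nonneg_left hA hco1) (mul_le_mul_of_nonneg_left hB hco2)
    _ = 4 * C / (1 - ν) + 4 * C / ν := by ring
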